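/- Let X₁ and X₂ be nonempty metric spaces and equip X₁ × X₂ with the ℓ² product metric. Then X₁ × X₂ is midpoint secure if and only if both X₁ and X₂ are midpoint secure. -/

import Mathlib

/-- A map `γ : ℝ → X` (viewed on `[0,1]`) is a geodesic with speed `L` if `L > 0` and
every `t ∈ [0,1]` has a neighborhood `U ⊆ ℝ` on which `γ` is a local isometry up to
the factor `L`: `dist (γ s) (γ s') = L * |s - s'|` for `s, s' ∈ U ∩ [0,1]`. -/
def IsGeodesicWithSpeed {X : Type*} [MetricSpace X] (γ : ℝ → X) (L : ℝ) : Prop :=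
  0 < L ∧ ∀ t ∈ Set.Icc (0:ℝ) 1, ∃ U ∈ nhds t,
    ∀ s ∈ U ∩ Set.Icc (0:ℝ) 1, ∀ s' ∈ U ∩ Set.Icc (0:ℝ) 1,
      dist (γ s) (γ s') = L * |s - s'|

/-- A geodesic is a map with some positive speed. -/
def IsGeodesic {X : Type*} [MetricSpace X] (γ : ℝ → X) : Prop :=
  ∃ L : ℝ, IsGeodesicWithSpeed γ L

/-- `B` is a blocking set for the configuration `(x, y)`: every geodesic joining `x` to `y`
has an interior point in `B`. -/
def Blocks {X : Type*} [MetricSpace X] (x y : X) (B : Set X) : Prop :=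
  ∀ γ : ℝ → X, IsGeodesic γ → γ 0 = x → γ 1 = y → ∃ t ∈ Set.Ioo (0:ℝ) 1, γ t ∈ B

/-- The configuration `(x, y)` is secure: it has a finite blocking set. -/
def Secure {X : Type*} [MetricSpace X] (x y : X) : Prop :=
  ∃ B : Set X, B.Finite ∧ Blocks x y B

/-- `B` is a midpoint blocking set for `(x, y)`: every geodesic joining `x` to `y`
has its midpoint in `B`. -/
def MidpointBlocks {X : Type*} [MetricSpace X] (x y : X) (B : Set X) : Prop :=
  ∀ γ : ℝ → X, IsGeodesic γ → γ 0 = x → γ 1 = y → γ (1/2 : ℝ) ∈ B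

/-- The configuration `(x, y)` is midpoint secure: it has a finite midpoint blocking set. -/
def MidpointSecure {X : Type*} [MetricSpace X] (x y : X) : Prop :=
  ∃ B : Set X, B.Finite ∧ MidpointBlocks x y B

/-- A metric space is midpoint secure if every configuration in it is midpoint secure. -/
def MidpointSecureSpace (X : Type*) [MetricSpace X] : Prop :=
  ∀ x y : X, MidpointSecure x y

section auxSecure
open Set
set_option maxHeartbeats 1600000

lemma key_alg {A1 A2 B1 B2 C1 C2 p q : ℝ} (hp : 0 < p) (hq : 0 < q)
    (hA1 : 0 ≤ A1) (hA2 : 0 ≤ A2) (hB1 : 0 ≤ B1) (hB2 : 0 ≤ B2)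
    (hC1 : 0 ≤ C1) (hC2 : 0 ≤ C2)
    (tr1 : C1 ≤ A1 + B1) (tr2 : C2 ≤ A2 + B2)
    (nA : A1^2 + A2^2 = p^2) (nB : B1^2 + B2^2 = q^2) (nC : C1^2 + C2^2 = (p+q)^2) :
    C1 = A1 + B1 ∧ C2 = A2 + B2 ∧ A1 * q = B1 * p ∧ A2 * q = B2 * p := by
  have hS : A1*B1 + A2*B2 = p*q := by
    have h1 : p*q ≤ A1*B1 + A2*B2 := by
      nlinarith [sq_nonneg (C1 - A1 - B1), sq_nonneg (C2 - A2 - B2)]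
    have h2 : (A1*B1 + A2*B2)^2 ≤ (p*q)^2 := by nlinarith [sq_nonneg (A1*B2 - A2*B1)]
    nlinarith [mul_pos hp hq]
  have h6 : (A1*B2 - A2*B1)^2 = 0 := by
    linear_combination (B1^2+B2^2)*nA + p^2*nB - (A1*B1+A2*B2 + p*q)*hS
  have hcs : A1*B2 = A2*B1 := by
    have := pow_eq_zero_iff (n := 2) (by norm_num) |>.mp h6
    linarith
  have hsum : C1^2 + C2^2 = (A1+B1)^2 + (A2+B2)^2 := by nlinarith
  have hzero : (A1+B1-C1)^2 + (A2+B2-C2)^2 + 2*C1*(A1+B1-C1) + 2*C2*(A2+B2-C2) = 0 := by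
    linear_combination (-1 : ℝ) * hsum
  have hu : 0 ≤ A1+B1-C1 := by linarith
  have hv : 0 ≤ A2+B2-C2 := by linarith
  have u2 : (A1+B1-C1)^2 = 0 := by
    linarith [sq_nonneg (A1+B1-C1), sq_nonneg (A2+B2-C2), mul_nonneg hC1 hu, mul_nonneg hC2 hv]
  have v2 : (A2+B2-C2)^2 = 0 := by
    linarith [sq_nonneg (A1+B1-C1), sq_nonneg (A2+B2-C2), mul_nonneg hC1 hu, mul_nonneg hC2 hv]
  have e1 : C1 = A1 + B1 := by
    have := pow_eq_zero_iff (n := 2) (by norm_num) |>.mp u2; linarith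
  have e2 : C2 = A2 + B2 := by
    have := pow_eq_zero_iff (n := 2) (by norm_num) |>.mp v2; linarith
  have h31 : (A1*q)^2 = (B1*p)^2 := by
    have h4 : (A1*B2)^2 = (A2*B1)^2 := by rw [hcs]
    linear_combination (-(A1^2))*nB + B1^2*nA + h4
  have h32 : (A2*q)^2 = (B2*p)^2 := by
    have h4 : (A2*B1)^2 = (A1*B2)^2 := by rw [hcs]
    linear_combination (-(A2^2))*nB + B2^2*nA + h4
  refine ⟨e1, e2, ?_, ?_⟩
  · nlinarith [mul_nonneg hA1 hq.le, mul_nonneg hB1 hp.le]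
  · nlinarith [mul_nonneg hA2 hq.le, mul_nonneg hB2 hp.le]

variable {X₁ X₂ : Type*} [MetricSpace X₁] [MetricSpace X₂]

lemma l2_dist_sq (z w : WithLp 2 (X₁ × X₂)) :
    dist z w ^ 2 = dist z.fst w.fst ^ 2 + dist z.snd w.snd ^ 2 := by
  have h := WithLp.prod_dist_eq_add (p := 2) (by norm_num) z w
  rw [h]
  rw [show ((2:ENNReal).toReal) = (2:ℝ) by norm_num]
  rw [← Real.rpow_natCast _ 2, ← Real.rpow_mul (by positivity)]
  norm_num

lemma exists_two_points {t : ℝ} (ht : t ∈ Icc (0:ℝ) 1) {U : Set ℝ} (hU : U ∈ nhds t) :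
    ∃ s ∈ U ∩ Icc (0:ℝ) 1, ∃ s' ∈ U ∩ Icc (0:ℝ) 1, s < s' := by
  obtain ⟨δ, hδ, hball⟩ := Metric.mem_nhds_iff.mp hU
  rw [Real.ball_eq_Ioo] at hball
  obtain ⟨ht0, ht1⟩ := ht
  by_cases h1 : t < 1
  · refine ⟨t, ⟨hball ⟨by linarith, by linarith⟩, ht0, ht1⟩,
      min (t + δ/2) 1, ⟨hball ⟨?_, ?_⟩, ?_, min_le_right _ _⟩, lt_min (by linarith) h1⟩
    · have : t - δ < min (t + δ/2) 1 := lt_min (by linarith) (by linarith)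
      exact this
    · exact lt_of_le_of_lt (min_le_left _ _) (by linarith)
    · exact le_min (by linarith) zero_le_one
  · have ht1' : t = 1 := le_antisymm ht1 (not_lt.mp h1)
    subst ht1'
    refine ⟨max (1 - δ/2) 0, ⟨hball ⟨?_, ?_⟩, le_max_right _ _, max_le (by linarith) zero_le_one⟩,
      1, ⟨hball ⟨by linarith, by linarith⟩, zero_le_one, le_refl 1⟩, ?_⟩
    · exact lt_of_lt_of_le (show (1:ℝ)-δ < 1-δ/2 by linarith) (le_max_left _ _)
    · exact max_lt (by linarith) (by linarith)
    · exact max_lt (by linarith) one_pos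

lemma icc_connected_principle (P : ℝ → Prop) (h0 : P 0)
    (hop : ∀ t ∈ Icc (0:ℝ) 1, P t → ∃ U, IsOpen U ∧ t ∈ U ∧ ∀ s ∈ U ∩ Icc (0:ℝ) 1, P s)
    (hcl : ∀ t ∈ Icc (0:ℝ) 1, ¬ P t → ∃ U, IsOpen U ∧ t ∈ U ∧ ∀ s ∈ U ∩ Icc (0:ℝ) 1, ¬ P s) :
    ∀ t ∈ Icc (0:ℝ) 1, P t := by
  by_contra hc
  push_neg at hc
  obtain ⟨t₀, ht₀, hPt₀⟩ := hc
  set A : Set ℝ := {s | ∃ U, IsOpen U ∧ s ∈ U ∧ ∀ u ∈ U ∩ Icc (0:ℝ) 1, P u} with hA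
  set B : Set ℝ := {s | ∃ U, IsOpen U ∧ s ∈ U ∧ ∀ u ∈ U ∩ Icc (0:ℝ) 1, ¬ P u} with hB
  have hAopen : IsOpen A := by
    refine isOpen_iff_mem_nhds.mpr ?_
    rintro s ⟨U, hUo, hsU, hUP⟩
    exact Filter.mem_of_superset (hUo.mem_nhds hsU) (fun u hu => ⟨U, hUo, hu, hUP⟩)
  have hBopen : IsOpen B := by
    refine isOpen_iff_mem_nhds.mpr ?_
    rintro s ⟨U, hUo, hsU, hUP⟩
    exact Filter.mem_of_superset (hUo.mem_nhds hsU) (fun u hu => ⟨U, hUo, hu, hUP⟩)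
  have hcover : Icc (0:ℝ) 1 ⊆ A ∪ B := by
    intro s hs
    by_cases hP : P s
    · exact Or.inl (hop s hs hP)
    · exact Or.inr (hcl s hs hP)
  have hAne : (Icc (0:ℝ) 1 ∩ A).Nonempty := by
    refine ⟨0, ⟨le_refl 0, zero_le_one⟩, hop 0 ⟨le_refl 0, zero_le_one⟩ h0⟩
  have hBne : (Icc (0:ℝ) 1 ∩ B).Nonempty := ⟨t₀, ht₀, hcl t₀ ht₀ hPt₀⟩
  obtain ⟨z, hzI, hzA, hzB⟩ := isPreconnected_Icc A B hAopen hBopen hcover hAne hBne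
  obtain ⟨U, hUo, hzU, hUP⟩ := hzA
  obtain ⟨V, hVo, hzV, hVP⟩ := hzB
  exact hVP z ⟨hzV, hzI⟩ (hUP z ⟨hzU, hzI⟩)

lemma pair_const {J : Set ℝ} (g : ℝ → ℝ → ℝ)
    (h : ∀ s ∈ J, ∀ u ∈ J, ∀ s' ∈ J, s < u → u < s' → g s u = g s s' ∧ g u s' = g s s') :
    ∀ s ∈ J, ∀ s' ∈ J, ∀ σ ∈ J, ∀ σ' ∈ J, s < s' → σ < σ' → g s s' = g σ σ' := by
  have claim1 : ∀ a ∈ J, ∀ b ∈ J, ∀ c ∈ J, a ≤ b → b < c → g b c = g a c := by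
    intro a ha b hb c hc hab hbc
    rcases eq_or_lt_of_le hab with rfl | hab
    · rfl
    · exact (h a ha b hb c hc hab hbc).2.trans rfl
  have claim2 : ∀ a ∈ J, ∀ b ∈ J, ∀ c ∈ J, a < b → b ≤ c → g a b = g a c := by
    intro a ha b hb c hc hab hbc
    rcases eq_or_lt_of_le hbc with rfl | hbc
    · rfl
    · exact (h a ha b hb c hc hab hbc).1
  intro s hs s' hs' σ hσ σ' hσ' h1 h2
  have hm : min s σ ∈ J := by rcases min_cases s σ with ⟨h, _⟩ | ⟨h, _⟩ <;> rw [h] <;> assumption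
  have hM : max s' σ' ∈ J := by rcases max_cases s' σ' with ⟨h, _⟩ | ⟨h, _⟩ <;> rw [h] <;> assumption
  have e1 : g s s' = g (min s σ) (max s' σ') := by
    rw [claim1 (min s σ) hm s hs s' hs' (min_le_left _ _) h1]
    exact claim2 _ hm _ hs' _ hM (lt_of_le_of_lt (min_le_left _ _) h1) (le_max_left _ _)
  have e2 : g σ σ' = g (min s σ) (max s' σ') := by
    rw [claim1 (min s σ) hm σ hσ σ' hσ' (min_le_right _ _) h2]
    exact claim2 _ hm _ hσ' _ hM (lt_of_le_of_lt (min_le_right _ _) h2) (le_max_right _ _)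
  rw [e1, e2]

lemma local_ratio {γ : ℝ → WithLp 2 (X₁ × X₂)} {L : ℝ} (hL : 0 < L)
    {t : ℝ} (ht : t ∈ Icc (0:ℝ) 1) {U : Set ℝ} (hU : U ∈ nhds t)
    (hdist : ∀ s ∈ U ∩ Icc (0:ℝ) 1, ∀ s' ∈ U ∩ Icc (0:ℝ) 1,
      dist (γ s) (γ s') = L * |s - s'|) :
    ∃ a b : ℝ, 0 ≤ a ∧ 0 ≤ b ∧ a^2 + b^2 = L^2 ∧ ∃ V, IsOpen V ∧ t ∈ V ∧
      ∀ s ∈ V ∩ Icc (0:ℝ) 1, ∀ s' ∈ V ∩ Icc (0:ℝ) 1,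
        dist (γ s).fst (γ s').fst = a * |s - s'| ∧ dist (γ s).snd (γ s').snd = b * |s - s'| := by
  obtain ⟨δ, hδ, hsub⟩ := Metric.mem_nhds_iff.mp hU
  set V := Metric.ball t δ with hV
  set J := V ∩ Icc (0:ℝ) 1 with hJ
  have hJU : J ⊆ U ∩ Icc (0:ℝ) 1 := fun s hs => ⟨hsub hs.1, hs.2⟩
  -- squared norm fact
  have F : ∀ s ∈ J, ∀ s' ∈ J,
      dist (γ s).fst (γ s').fst ^ 2 + dist (γ s).snd (γ s').snd ^ 2 = (L * |s - s'|)^2 := by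
    intro s hs s' hs'
    rw [← l2_dist_sq, hdist s (hJU hs) s' (hJU hs')]
  -- key consequences for triples
  have step : ∀ s ∈ J, ∀ u ∈ J, ∀ s' ∈ J, s < u → u < s' →
      (dist (γ s).fst (γ s').fst = dist (γ s).fst (γ u).fst + dist (γ u).fst (γ s').fst ∧
       dist (γ s).snd (γ s').snd = dist (γ s).snd (γ u).snd + dist (γ u).snd (γ s').snd) ∧
      (dist (γ s).fst (γ u).fst * (s' - u) = dist (γ u).fst (γ s').fst * (u - s) ∧
       dist (γ s).snd (γ u).snd * (s' - u) = dist (γ u).snd (γ s').snd * (u - s)) := by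
    intro s hs u hu s' hs' h1 h2
    have nA := F s hs u hu
    have nB := F u hu s' hs'
    have nC := F s hs s' hs'
    rw [show |s - u| = u - s by rw [abs_sub_comm]; exact abs_of_pos (by linarith)] at nA
    rw [show |u - s'| = s' - u by rw [abs_sub_comm]; exact abs_of_pos (by linarith)] at nB
    rw [show |s - s'| = s' - s by rw [abs_sub_comm]; exact abs_of_pos (by linarith)] at nC
    have hpq : L * (s' - s) = L * (u - s) + L * (s' - u) := by ring
    rw [mul_comm] at nA nB nC
    obtain ⟨e1, e2, r1, r2⟩ := key_alg (mul_pos (by linarith) hL) (mul_pos (by linarith) hL)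
      dist_nonneg dist_nonneg dist_nonneg dist_nonneg dist_nonneg dist_nonneg
      (dist_triangle _ _ _) (dist_triangle _ _ _) nA nB
      (by rw [nC]; ring)
    refine ⟨⟨e1, e2⟩, ?_, ?_⟩
    · have := r1
      have hL' : L ≠ 0 := hL.ne'
      field_simp at this ⊢
      nlinarith [this]
    · have := r2
      have hL' : L ≠ 0 := hL.ne'
      field_simp at this ⊢
      nlinarith [this]
  -- ratio functions
  set g1 : ℝ → ℝ → ℝ := fun s s' => dist (γ s).fst (γ s').fst / (s' - s) with hg1
  set g2 : ℝ → ℝ → ℝ := fun s s' => dist (γ s).snd (γ s').snd / (s' - s) with hg2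
  have hyp1 : ∀ s ∈ J, ∀ u ∈ J, ∀ s' ∈ J, s < u → u < s' →
      g1 s u = g1 s s' ∧ g1 u s' = g1 s s' := by
    intro s hs u hu s' hs' h1 h2
    obtain ⟨⟨e1, _⟩, ⟨r1, _⟩⟩ := step s hs u hu s' hs' h1 h2
    rw [hg1]
    simp only []
    constructor
    · rw [div_eq_div_iff (by linarith) (by linarith), e1]; linear_combination r1
    · rw [div_eq_div_iff (by linarith) (by linarith), e1]; linear_combination (-1 : ℝ) * r1
  have hyp2 : ∀ s ∈ J, ∀ u ∈ J, ∀ s' ∈ J, s < u → u < s' →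
      g2 s u = g2 s s' ∧ g2 u s' = g2 s s' := by
    intro s hs u hu s' hs' h1 h2
    obtain ⟨⟨_, e2⟩, ⟨_, r2⟩⟩ := step s hs u hu s' hs' h1 h2
    rw [hg2]
    simp only []
    constructor
    · rw [div_eq_div_iff (by linarith) (by linarith), e2]; linear_combination r2
    · rw [div_eq_div_iff (by linarith) (by linarith), e2]; linear_combination (-1 : ℝ) * r2
  have pc1 := pair_const g1 hyp1
  have pc2 := pair_const g2 hyp2
  obtain ⟨α, hα, β, hβ, hαβ⟩ := exists_two_points ht (Metric.ball_mem_nhds t hδ)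
  set a := g1 α β with haa
  set b := g2 α β with hbb
  have hβα : (0:ℝ) < β - α := by linarith
  have ha : 0 ≤ a := div_nonneg dist_nonneg hβα.le
  have hb : 0 ≤ b := div_nonneg dist_nonneg hβα.le
  have hFab := F α hα β hβ
  rw [show |α - β| = β - α by rw [abs_sub_comm]; exact abs_of_pos hβα] at hFab
  have hab : a^2 + b^2 = L^2 := by
    rw [haa, hbb, hg1, hg2]
    simp only []
    field_simp
    linear_combination hFab
  -- main claim for ordered pairs
  have claim : ∀ s ∈ J, ∀ s' ∈ J, s < s' →
      dist (γ s).fst (γ s').fst = a * (s' - s) ∧ dist (γ s).snd (γ s').snd = b * (s' - s) := by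
    intro s hs s' hs' h
    have h1 : g1 s s' = a := pc1 s hs s' hs' α hα β hβ h hαβ
    have h2 : g2 s s' = b := pc2 s hs s' hs' α hα β hβ h hαβ
    rw [hg1] at h1
    rw [hg2] at h2
    simp only [] at h1 h2
    constructor
    · rw [← h1]; exact (mul_div_cancel_right₀ _ (ne_of_gt (by linarith : (0:ℝ) < s' - s))).symm.trans (by ring)
    · rw [← h2]; exact (mul_div_cancel_right₀ _ (ne_of_gt (by linarith : (0:ℝ) < s' - s))).symm.trans (by ring)
  refine ⟨a, b, ha, hb, hab, V, Metric.isOpen_ball, Metric.mem_ball_self hδ, ?_⟩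
  intro s hs s' hs'
  rcases lt_trichotomy s s' with h | h | h
  · obtain ⟨c1, c2⟩ := claim s hs s' hs' h
    rw [show |s - s'| = s' - s by rw [abs_sub_comm]; exact abs_of_pos (by linarith)]
    exact ⟨c1, c2⟩
  · subst h; simp
  · obtain ⟨c1, c2⟩ := claim s' hs' s hs h
    rw [show |s - s'| = s - s' from abs_of_pos (by linarith)]
    rw [dist_comm (γ s).fst, dist_comm (γ s).snd]
    exact ⟨c1, c2⟩

lemma global_ratio {γ : ℝ → WithLp 2 (X₁ × X₂)} {L : ℝ} (h : IsGeodesicWithSpeed γ L) :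
    ∃ a b : ℝ, 0 ≤ a ∧ 0 ≤ b ∧ a^2 + b^2 = L^2 ∧ ∀ t ∈ Icc (0:ℝ) 1, ∃ V, IsOpen V ∧ t ∈ V ∧
      ∀ s ∈ V ∩ Icc (0:ℝ) 1, ∀ s' ∈ V ∩ Icc (0:ℝ) 1,
        dist (γ s).fst (γ s').fst = a * |s - s'| ∧ dist (γ s).snd (γ s').snd = b * |s - s'| := by
  obtain ⟨hL, hg⟩ := h
  have h01 : (0:ℝ) ∈ Icc (0:ℝ) 1 := ⟨le_refl 0, zero_le_one⟩
  obtain ⟨U₀, hU₀, hp₀⟩ := hg 0 h01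
  obtain ⟨a, b, ha, hb, hab, V₀, hV₀o, hV₀m, hV₀p⟩ := local_ratio hL h01 hU₀ hp₀
  set P : ℝ → Prop := fun t => ∃ V, IsOpen V ∧ t ∈ V ∧
      ∀ s ∈ V ∩ Icc (0:ℝ) 1, ∀ s' ∈ V ∩ Icc (0:ℝ) 1,
        dist (γ s).fst (γ s').fst = a * |s - s'| ∧ dist (γ s).snd (γ s').snd = b * |s - s'| with hP
  refine ⟨a, b, ha, hb, hab, icc_connected_principle P ⟨V₀, hV₀o, hV₀m, hV₀p⟩ ?_ ?_⟩
  · rintro t ht ⟨V, hVo, htV, hVp⟩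
    exact ⟨V, hVo, htV, fun s hs => ⟨V, hVo, hs.1, hVp⟩⟩
  · intro t ht hPt
    obtain ⟨U, hU, hp⟩ := hg t ht
    obtain ⟨a', b', _, _, _, V', hV'o, hV'm, hV'p⟩ := local_ratio hL ht hU hp
    refine ⟨V', hV'o, hV'm, ?_⟩
    rintro s hs ⟨W, hWo, hsW, hWp⟩
    obtain ⟨u, hu, u', hu', huu⟩ := exists_two_points hs.2
      ((hV'o.inter hWo).mem_nhds ⟨hs.1, hsW⟩)
    have hu1 : u ∈ V' ∩ Icc (0:ℝ) 1 := ⟨hu.1.1, hu.2⟩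
    have hu2 : u ∈ W ∩ Icc (0:ℝ) 1 := ⟨hu.1.2, hu.2⟩
    have hu1' : u' ∈ V' ∩ Icc (0:ℝ) 1 := ⟨hu'.1.1, hu'.2⟩
    have hu2' : u' ∈ W ∩ Icc (0:ℝ) 1 := ⟨hu'.1.2, hu'.2⟩
    have d1 := (hV'p u hu1 u' hu1').1
    have d2 := (hWp u hu2 u' hu2').1
    have e1 := (hV'p u hu1 u' hu1').2
    have e2 := (hWp u hu2 u' hu2').2
    have habs : |u - u'| ≠ 0 := by
      rw [abs_ne_zero]; intro hc; rw [sub_eq_zero] at hc; exact absurd hc (ne_of_lt huu)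
    have haa : a' = a := by
      have := d1.symm.trans d2
      exact mul_right_cancel₀ habs this
    have hbb : b' = b := by
      have := e1.symm.trans e2
      exact mul_right_cancel₀ habs this
    rw [haa, hbb] at hV'p
    exact hPt ⟨V', hV'o, hV'm, hV'p⟩

-- component behavior, generic in target space
lemma component_const {X : Type*} [MetricSpace X] {δ : ℝ → X}
    (hglob : ∀ t ∈ Icc (0:ℝ) 1, ∃ V, IsOpen V ∧ t ∈ V ∧
      ∀ s ∈ V ∩ Icc (0:ℝ) 1, ∀ s' ∈ V ∩ Icc (0:ℝ) 1, dist (δ s) (δ s') = 0 * |s - s'|) :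
    ∀ t ∈ Icc (0:ℝ) 1, δ t = δ 0 := by
  refine icc_connected_principle (fun t => δ t = δ 0) rfl ?_ ?_
  · intro t ht hPt
    obtain ⟨V, hVo, htV, hVp⟩ := hglob t ht
    refine ⟨V, hVo, htV, fun s hs => ?_⟩
    show δ s = δ 0
    have := hVp s hs t ⟨htV, ht⟩
    rw [zero_mul, dist_eq_zero] at this
    rw [this]; exact hPt
  · intro t ht hPt
    obtain ⟨V, hVo, htV, hVp⟩ := hglob t ht
    refine ⟨V, hVo, htV, fun s hs hc => ?_⟩
    have h2 := hVp s hs t ⟨htV, ht⟩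
    rw [zero_mul, dist_eq_zero] at h2
    exact hPt (h2.symm.trans hc)

lemma component_geo {X : Type*} [MetricSpace X] {δ : ℝ → X} {a : ℝ} (ha : 0 < a)
    (hglob : ∀ t ∈ Icc (0:ℝ) 1, ∃ V, IsOpen V ∧ t ∈ V ∧
      ∀ s ∈ V ∩ Icc (0:ℝ) 1, ∀ s' ∈ V ∩ Icc (0:ℝ) 1, dist (δ s) (δ s') = a * |s - s'|) :
    IsGeodesicWithSpeed δ a := by
  refine ⟨ha, fun t ht => ?_⟩
  obtain ⟨V, hVo, htV, hVp⟩ := hglob t ht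
  exact ⟨V, hVo.mem_nhds htV, hVp⟩

lemma sq_cancel {x y : ℝ} (hx : 0 ≤ x) (hy : 0 ≤ y) (h : x^2 = y^2) : x = y := by
  nlinarith [sq_nonneg (x - y), sq_nonneg (x + y)]

lemma lift_dist_fst (a a' : X₁) (c : X₂) :
    dist ((WithLp.equiv 2 (X₁ × X₂)).symm (a, c)) ((WithLp.equiv 2 (X₁ × X₂)).symm (a', c))
      = dist a a' := by
  apply sq_cancel dist_nonneg dist_nonneg
  rw [l2_dist_sq]
  simp [WithLp.equiv_symm_apply]

lemma lift_dist_snd (b b' : X₂) (c : X₁) :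
    dist ((WithLp.equiv 2 (X₁ × X₂)).symm (c, b)) ((WithLp.equiv 2 (X₁ × X₂)).symm (c, b'))
      = dist b b' := by
  apply sq_cancel dist_nonneg dist_nonneg
  rw [l2_dist_sq]
  simp [WithLp.equiv_symm_apply]

end auxSecure
open Set
set_option maxHeartbeats 1600000

/-- An ℓ² product of nonempty metric spaces is midpoint secure iff both factors are. -/
theorem stmt8 {X₁ X₂ : Type*} [MetricSpace X₁] [MetricSpace X₂]
    [Nonempty X₁] [Nonempty X₂] :
    MidpointSecureSpace (WithLp 2 (X₁ × X₂)) ↔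
      MidpointSecureSpace X₁ ∧ MidpointSecureSpace X₂ := by

  constructor
  · intro h
    constructor
    · intro x y
      obtain ⟨c⟩ := ‹Nonempty X₂›
      obtain ⟨B, hBfin, hBblock⟩ :=
        h ((WithLp.equiv 2 (X₁ × X₂)).symm (x, c)) ((WithLp.equiv 2 (X₁ × X₂)).symm (y, c))
      refine ⟨(fun z : WithLp 2 (X₁ × X₂) => z.fst) '' B, hBfin.image _, ?_⟩
      intro γ hγ h0 h1
      set Γ : ℝ → WithLp 2 (X₁ × X₂) := fun t => (WithLp.equiv 2 (X₁ × X₂)).symm (γ t, c)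
        with hΓdef
      have hΓ : IsGeodesic Γ := by
        obtain ⟨L, hL, hgeo⟩ := hγ
        refine ⟨L, hL, fun t ht => ?_⟩
        obtain ⟨U, hU, hp⟩ := hgeo t ht
        refine ⟨U, hU, fun s hs s' hs' => ?_⟩
        rw [hΓdef]
        simp only []
        rw [lift_dist_fst]
        exact hp s hs s' hs'
      have hm := hBblock Γ hΓ (by rw [hΓdef]; simp only []; rw [h0]) (by rw [hΓdef]; simp only []; rw [h1])
      exact ⟨Γ (1/2 : ℝ), hm, rfl⟩
    · intro x y
      obtain ⟨c⟩ := ‹Nonempty X₁›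
      obtain ⟨B, hBfin, hBblock⟩ :=
        h ((WithLp.equiv 2 (X₁ × X₂)).symm (c, x)) ((WithLp.equiv 2 (X₁ × X₂)).symm (c, y))
      refine ⟨(fun z : WithLp 2 (X₁ × X₂) => z.snd) '' B, hBfin.image _, ?_⟩
      intro γ hγ h0 h1
      set Γ : ℝ → WithLp 2 (X₁ × X₂) := fun t => (WithLp.equiv 2 (X₁ × X₂)).symm (c, γ t)
        with hΓdef
      have hΓ : IsGeodesic Γ := by
        obtain ⟨L, hL, hgeo⟩ := hγ
        refine ⟨L, hL, fun t ht => ?_⟩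
        obtain ⟨U, hU, hp⟩ := hgeo t ht
        refine ⟨U, hU, fun s hs s' hs' => ?_⟩
        rw [hΓdef]
        simp only []
        rw [lift_dist_snd]
        exact hp s hs s' hs'
      have hm := hBblock Γ hΓ (by rw [hΓdef]; simp only []; rw [h0]) (by rw [hΓdef]; simp only []; rw [h1])
      exact ⟨Γ (1/2 : ℝ), hm, rfl⟩
  · rintro ⟨h1, h2⟩ x y
    obtain ⟨B₁, hB₁f, hB₁⟩ := h1 x.fst y.fst
    obtain ⟨B₂, hB₂f, hB₂⟩ := h2 x.snd y.snd
    refine ⟨(WithLp.equiv 2 (X₁ × X₂)).symm '' ((insert x.fst B₁) ×ˢ (insert x.snd B₂)),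
      (((hB₁f.insert _).prod (hB₂f.insert _)).image _), ?_⟩
    intro γ hγ h0 hend
    obtain ⟨L, hγL⟩ := hγ
    obtain ⟨a, b, ha, hb, hab, hglob⟩ := global_ratio hγL
    have hglob1 : ∀ t ∈ Icc (0:ℝ) 1, ∃ V, IsOpen V ∧ t ∈ V ∧
        ∀ s ∈ V ∩ Icc (0:ℝ) 1, ∀ s' ∈ V ∩ Icc (0:ℝ) 1,
          dist (γ s).fst (γ s').fst = a * |s - s'| := by
      intro t ht
      obtain ⟨V, hVo, htV, hVp⟩ := hglob t ht
      exact ⟨V, hVo, htV, fun s hs s' hs' => (hVp s hs s' hs').1⟩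
    have hglob2 : ∀ t ∈ Icc (0:ℝ) 1, ∃ V, IsOpen V ∧ t ∈ V ∧
        ∀ s ∈ V ∩ Icc (0:ℝ) 1, ∀ s' ∈ V ∩ Icc (0:ℝ) 1,
          dist (γ s).snd (γ s').snd = b * |s - s'| := by
      intro t ht
      obtain ⟨V, hVo, htV, hVp⟩ := hglob t ht
      exact ⟨V, hVo, htV, fun s hs s' hs' => (hVp s hs s' hs').2⟩
    have hhalf : (1/2 : ℝ) ∈ Icc (0:ℝ) 1 := ⟨by norm_num, by norm_num⟩
    have m1 : (γ (1/2 : ℝ)).fst ∈ insert x.fst B₁ := by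
      rcases eq_or_lt_of_le ha with haz | hap
      · rw [← haz] at hglob1
        have hcc : (γ (1/2 : ℝ)).fst = (γ (0:ℝ)).fst :=
          component_const (δ := fun t => (γ t).fst) hglob1 (1/2 : ℝ) hhalf
        rw [hcc, h0]
        exact mem_insert _ _
      · right
        exact hB₁ (fun t => (γ t).fst) ⟨a, component_geo hap hglob1⟩
          (show (γ (0:ℝ)).fst = x.fst by rw [h0]) (show (γ (1:ℝ)).fst = y.fst by rw [hend])
    have m2 : (γ (1/2 : ℝ)).snd ∈ insert x.snd B₂ := by
      rcases eq_or_lt_of_le hb with hbz | hbp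
      · rw [← hbz] at hglob2
        have hcc : (γ (1/2 : ℝ)).snd = (γ (0:ℝ)).snd :=
          component_const (δ := fun t => (γ t).snd) hglob2 (1/2 : ℝ) hhalf
        rw [hcc, h0]
        exact mem_insert _ _
      · right
        exact hB₂ (fun t => (γ t).snd) ⟨b, component_geo hbp hglob2⟩
          (show (γ (0:ℝ)).snd = x.snd by rw [h0]) (show (γ (1:ℝ)).snd = y.snd by rw [hend])
    exact ⟨((γ (1/2 : ℝ)).fst, (γ (1/2 : ℝ)).snd), ⟨m1, m2⟩, rfl⟩
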